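/- arXiv:1509.05250 — 2 statements merged into one kernel-verified Lean document; each statement's English description precedes it below -/
import Mathlib

section
/- Let n ≥ 1 and let R ∈ {0, ..., n}. For any function f of n arguments and any values θ_1, ..., θ_N, the restricted sums ∑^{n,R} defined by summing over indices j_1,...,j_n ∈ {1,...,N} with j_i ≠ j_k for all i ≠ k with i, k > R satisfy the recursion: ∑^{n,R} f(θ_{j_1},...,θ_{j_n}) = ∑^{n,R-1} f(θ_{j_1},...,θ_{j_n}) + ∑_{t=R+1}^{n} ∑^{n-1,R-1} g_{t,R}(θ_{j_1},...,θ_{j_{n-1}}), where g_{t,R} is obtained from f by identifying the R-th argument with the t-th argument and relabeling. -/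
open Finset

def restrictedSum {M α : Type*} [AddCommMonoid M] (N n R : ℕ)
    (θ : Fin N → α) (a₀ : α) (F : (ℕ → α) → M) : M :=
  ∑ j ∈ (Finset.univ : Finset (Fin n → Fin N)).filter
      (fun j => ∀ i k : Fin n, i ≠ k → R ≤ i.val → R ≤ k.val → j i ≠ j k),
    F (fun i => if h : 1 ≤ i ∧ i ≤ n then θ (j ⟨i - 1, by omega⟩) else a₀)

/-- The index set of the restricted sum. -/
def Aset (N n S : ℕ) : Finset (Fin n → Fin N) :=
  Finset.univ.filter (fun j => ∀ i k : Fin n, i ≠ k → S ≤ i.val → S ≤ k.val → j i ≠ j k)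

/-- The padded tuple. -/
def padf {α : Type*} {N : Type*} (n : ℕ) (θ : N → α) (a₀ : α) (j : Fin n → N) : ℕ → α :=
  fun i => if h : 1 ≤ i ∧ i ≤ n then θ (j ⟨i - 1, by omega⟩) else a₀

lemma restrictedSum_eq {M α : Type*} [AddCommMonoid M] (N n R : ℕ)
    (θ : Fin N → α) (a₀ : α) (F : (ℕ → α) → M) :
    restrictedSum N n R θ a₀ F = ∑ j ∈ Aset N n R, F (padf n θ a₀ j) := rfl

lemma mem_Aset {N n S : ℕ} {j : Fin n → Fin N} :
    j ∈ Aset N n S ↔ ∀ i k : Fin n, i ≠ k → S ≤ i.val → S ≤ k.val → j i ≠ j k := by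
  simp [Aset]

/-- Delete the coordinate at (0-indexed) position `R-1`. -/
def emap (N n R : ℕ) (j : Fin n → Fin N) (i : Fin (n - 1)) : Fin N :=
  j ⟨if i.val < R - 1 then i.val else i.val + 1, by have := i.2; split <;> omega⟩

lemma emap_lt {N n R : ℕ} (j : Fin n → Fin N) (i : Fin (n - 1)) (h : i.val < R - 1) :
    emap N n R j i = j ⟨i.val, by have := i.2; omega⟩ := by
  unfold emap; congr 1; exact Fin.ext (by simp [h])

lemma emap_ge {N n R : ℕ} (j : Fin n → Fin N) (i : Fin (n - 1)) (h : ¬ i.val < R - 1) :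
    emap N n R j i = j ⟨i.val + 1, by have := i.2; omega⟩ := by
  unfold emap; congr 1; exact Fin.ext (by simp [h])

/-- Insert at (0-indexed) position `R-1` a copy of the coordinate at position `t-2`. -/
def imap (N n R t : ℕ) (hR : 1 ≤ R) (hst : R + 1 ≤ t) (ht : t ≤ n)
    (w : Fin (n - 1) → Fin N) (i : Fin n) : Fin N :=
  w ⟨if i.val < R - 1 then i.val else if i.val = R - 1 then t - 2 else i.val - 1,
    by have := i.2; split
       · omega
       · split <;> omega⟩

lemma imap_lt {N n R t : ℕ} (hR : 1 ≤ R) (hst : R + 1 ≤ t) (ht : t ≤ n)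
    (w : Fin (n - 1) → Fin N) (i : Fin n) (h : i.val < R - 1) :
    imap N n R t hR hst ht w i = w ⟨i.val, by have := i.2; omega⟩ := by
  unfold imap; congr 1; exact Fin.ext (by simp [h])

lemma imap_eq {N n R t : ℕ} (hR : 1 ≤ R) (hst : R + 1 ≤ t) (ht : t ≤ n)
    (w : Fin (n - 1) → Fin N) (i : Fin n) (h : i.val = R - 1) :
    imap N n R t hR hst ht w i = w ⟨t - 2, by omega⟩ := by
  unfold imap; congr 1; exact Fin.ext (by simp [h])

lemma imap_gt {N n R t : ℕ} (hR : 1 ≤ R) (hst : R + 1 ≤ t) (ht : t ≤ n)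
    (w : Fin (n - 1) → Fin N) (i : Fin n) (h1 : ¬ i.val < R - 1) (h2 : i.val ≠ R - 1) :
    imap N n R t hR hst ht w i = w ⟨i.val - 1, by have := i.2; omega⟩ := by
  unfold imap; congr 1; exact Fin.ext (by simp [h1, h2])

lemma Tsum {M α : Type*} [AddCommMonoid M] (N n R t : ℕ) (hR : 1 ≤ R) (hRn : R ≤ n)
    (ht1 : R + 1 ≤ t) (ht2 : t ≤ n) (θ : Fin N → α) (a₀ : α) (f : (ℕ → α) → M) :
    ∑ j ∈ (Aset N n R).filter
        (fun j => j ⟨R - 1, by omega⟩ = j ⟨t - 1, by omega⟩),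
      f (padf n θ a₀ j) =
    ∑ w ∈ Aset N (n - 1) (R - 1),
      f (fun i => if i < R then padf (n-1) θ a₀ w i else
          if i = R then padf (n-1) θ a₀ w (t - 1) else padf (n-1) θ a₀ w (i - 1)) := by
  classical
  refine Finset.sum_nbij' (emap N n R) (imap N n R t hR ht1 ht2)
    ?_ ?_ ?_ ?_ ?_
  · -- forward membership
    intro j hj
    rw [Finset.mem_filter, mem_Aset] at hj
    rw [mem_Aset]
    intro i k hik hi hk
    rw [emap_ge j i (by omega), emap_ge j k (by omega)]
    refine hj.1 _ _ ?_ ?_ ?_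
    · simp only [ne_eq, Fin.mk.injEq]
      intro h; exact hik (Fin.ext (by omega))
    · exact (by omega : R ≤ i.val + 1)
    · exact (by omega : R ≤ k.val + 1)
  · -- backward membership
    intro w hw
    rw [mem_Aset] at hw
    rw [Finset.mem_filter, mem_Aset]
    refine ⟨fun i k hik hi hk => ?_, ?_⟩
    · rw [imap_gt hR ht1 ht2 w i (by omega) (by omega),
        imap_gt hR ht1 ht2 w k (by omega) (by omega)]
      refine hw _ _ ?_ ?_ ?_
      · simp only [ne_eq, Fin.mk.injEq]
        intro h; exact hik (Fin.ext (by omega))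
      · exact (by omega : R - 1 ≤ i.val - 1)
      · exact (by omega : R - 1 ≤ k.val - 1)
    · rw [imap_eq hR ht1 ht2 w ⟨R - 1, by omega⟩ rfl,
        imap_gt hR ht1 ht2 w ⟨t - 1, by omega⟩
          ((by omega : ¬ (t - 1) < R - 1) : _) ((by omega : t - 1 ≠ R - 1) : _)]
      exact congrArg w (Fin.ext (show t - 2 = t - 1 - 1 by omega))
  · -- left inverse
    intro j hj
    rw [Finset.mem_filter] at hj
    funext i
    by_cases h1 : i.val < R - 1
    · rw [imap_lt hR ht1 ht2 _ i h1, emap_lt j _ (show i.val < R - 1 from h1)]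
    · by_cases h2 : i.val = R - 1
      · rw [imap_eq hR ht1 ht2 _ i h2,
          emap_ge j ⟨t - 2, by omega⟩ ((by omega : ¬ t - 2 < R - 1) : _)]
        calc j ⟨t - 2 + 1, by omega⟩
            = j ⟨t - 1, by omega⟩ := congrArg j (Fin.ext (show t - 2 + 1 = t - 1 by omega))
          _ = j ⟨R - 1, by omega⟩ := hj.2.symm
          _ = j i := congrArg j (Fin.ext (show R - 1 = i.val by omega))
      · rw [imap_gt hR ht1 ht2 _ i h1 h2,
          emap_ge j ⟨i.val - 1, by have := i.2; omega⟩ ((by omega : ¬ i.val - 1 < R - 1) : _)]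
        exact congrArg j (Fin.ext (show i.val - 1 + 1 = i.val by omega))
  · -- right inverse
    intro w _
    funext i
    by_cases h1 : i.val < R - 1
    · rw [emap_lt _ i h1, imap_lt hR ht1 ht2 w _ (show (i.val : ℕ) < R - 1 from h1)]
    · rw [emap_ge _ i h1, imap_gt hR ht1 ht2 w _ ((by omega : ¬ i.val + 1 < R - 1) : _)
        ((by omega : i.val + 1 ≠ R - 1) : _)]
      exact congrArg w (Fin.ext (show i.val + 1 - 1 = i.val by omega))
  · -- values agree
    intro j hj
    rw [Finset.mem_filter] at hj
    congr 1
    funext i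
    simp only [padf]
    by_cases hiR : i < R
    · rcases Nat.eq_zero_or_pos i with hi0 | hi0
      · subst hi0
        rw [if_pos hiR, dif_neg ((by omega : ¬ (1 ≤ 0 ∧ 0 ≤ n)) : _),
          dif_neg ((by omega : ¬ (1 ≤ 0 ∧ 0 ≤ n - 1)) : _)]
      · rw [if_pos hiR, dif_pos ((by omega : 1 ≤ i ∧ i ≤ n) : _),
          dif_pos ((by omega : 1 ≤ i ∧ i ≤ n - 1) : _),
          emap_lt j ⟨i - 1, by omega⟩ ((by omega : i - 1 < R - 1) : _)]
    · by_cases hiR' : i = R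
      · rw [if_neg hiR, if_pos hiR', dif_pos ((by omega : 1 ≤ i ∧ i ≤ n) : _),
          dif_pos ((by omega : 1 ≤ t - 1 ∧ t - 1 ≤ n - 1) : _),
          emap_ge j ⟨t - 1 - 1, by omega⟩ ((by omega : ¬ t - 1 - 1 < R - 1) : _)]
        refine congrArg θ ?_
        calc j ⟨i - 1, by omega⟩
            = j ⟨R - 1, by omega⟩ := congrArg j (Fin.ext (show i - 1 = R - 1 by omega))
          _ = j ⟨t - 1, by omega⟩ := hj.2
          _ = j ⟨t - 1 - 1 + 1, by omega⟩ :=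
              congrArg j (Fin.ext (show t - 1 = t - 1 - 1 + 1 by omega))
      · rw [if_neg hiR, if_neg hiR']
        by_cases hin : i ≤ n
        · rw [dif_pos ((by omega : 1 ≤ i ∧ i ≤ n) : _),
            dif_pos ((by omega : 1 ≤ i - 1 ∧ i - 1 ≤ n - 1) : _),
            emap_ge j ⟨i - 1 - 1, by omega⟩ ((by omega : ¬ i - 1 - 1 < R - 1) : _)]
          exact congrArg θ (congrArg j (Fin.ext (show i - 1 = i - 1 - 1 + 1 by omega)))
        · rw [dif_neg ((by omega : ¬ (1 ≤ i ∧ i ≤ n)) : _),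
            dif_neg ((by omega : ¬ (1 ≤ i - 1 ∧ i - 1 ≤ n - 1)) : _)]

/-- Recursion for restricted sums:
`∑^{n,R} f = ∑^{n,R-1} f + ∑_{t=R+1}^{n} ∑^{n-1,R-1} g_{t,R}`, where `g_{t,R}` is
obtained from `f` by identifying the `R`-th argument with the `t`-th argument and
relabelling the remaining `n-1` arguments. -/
theorem stmt16 {M α : Type*} [AddCommMonoid M] (N n R : ℕ) (hR : 1 ≤ R) (hRn : R ≤ n)
    (θ : Fin N → α) (a₀ : α) (f : (ℕ → α) → M) :
    restrictedSum N n R θ a₀ f =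
      restrictedSum N n (R - 1) θ a₀ f +
        ∑ t ∈ Finset.Icc (R + 1) n,
          restrictedSum N (n - 1) (R - 1) θ a₀
            (fun w => f (fun i => if i < R then w i else if i = R then w (t - 1) else w (i - 1))) := by
  classical
  have hn1 : 1 ≤ n := le_trans hR hRn
  have hRn' : R - 1 < n := by omega
  simp only [restrictedSum_eq]
  have hsub : Aset N n (R-1) ⊆ Aset N n R := by
    intro j hj
    rw [mem_Aset] at hj ⊢
    intro i k hik hi hk
    exact hj i k hik (by omega) (by omega)
  set T : ℕ → Finset (Fin n → Fin N) := fun t =>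
    if h : R + 1 ≤ t ∧ t ≤ n then
      (Aset N n R).filter (fun j => j ⟨R - 1, hRn'⟩ = j ⟨t - 1, by omega⟩)
    else ∅
    with hTdef
  have hT : ∀ (t : ℕ) (h1 : R + 1 ≤ t) (h2 : t ≤ n),
      T t = (Aset N n R).filter (fun j => j ⟨R - 1, hRn'⟩ = j ⟨t - 1, by omega⟩) := by
    intro t h1 h2
    rw [hTdef]
    exact dif_pos ⟨h1, h2⟩
  have hdecomp : Aset N n R \ Aset N n (R-1) = (Finset.Icc (R+1) n).biUnion T := by
    ext j
    simp only [Finset.mem_sdiff, Finset.mem_biUnion, Finset.mem_Icc]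
    constructor
    · rintro ⟨hjR, hjR1⟩
      rw [mem_Aset] at hjR
      rw [mem_Aset] at hjR1
      push_neg at hjR1
      obtain ⟨i, k, hik, hi, hk, heq⟩ := hjR1
      rcases Nat.lt_or_ge i.val R with hi' | hi'
      · have hiv : i.val = R - 1 := by omega
        have hkv : R ≤ k.val := by
          rcases Nat.lt_or_ge k.val R with h | h
          · exact absurd (Fin.ext (by omega) : i = k) hik
          · exact h
        refine ⟨k.val + 1, ⟨by omega, by have := k.2; omega⟩, ?_⟩
        rw [hT _ (by omega) (by have := k.2; omega), Finset.mem_filter]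
        refine ⟨mem_Aset.2 hjR, ?_⟩
        rw [show (⟨R - 1, hRn'⟩ : Fin n) = i from Fin.ext (show R - 1 = i.val by omega),
          show (⟨k.val + 1 - 1, by have := k.2; omega⟩ : Fin n) = k from Fin.ext (show k.val + 1 - 1 = k.val by omega)]
        exact heq
      · have hkv : k.val = R - 1 := by
          rcases Nat.lt_or_ge k.val R with h | h
          · omega
          · exact absurd heq (hjR i k hik hi' h)
        refine ⟨i.val + 1, ⟨by omega, by have := i.2; omega⟩, ?_⟩
        rw [hT _ (by omega) (by have := i.2; omega), Finset.mem_filter]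
        refine ⟨mem_Aset.2 hjR, ?_⟩
        rw [show (⟨R - 1, hRn'⟩ : Fin n) = k from Fin.ext (show R - 1 = k.val by omega),
          show (⟨i.val + 1 - 1, by have := i.2; omega⟩ : Fin n) = i from Fin.ext (show i.val + 1 - 1 = i.val by omega)]
        exact heq.symm
    · rintro ⟨t, ⟨ht1, ht2⟩, hjT⟩
      rw [hT _ ht1 ht2, Finset.mem_filter] at hjT
      refine ⟨hjT.1, ?_⟩
      rw [mem_Aset]
      intro hall
      refine hall ⟨R - 1, hRn'⟩ ⟨t - 1, by omega⟩ ?_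
        (by exact (le_refl (R-1) : R - 1 ≤ R - 1)) (by exact (by omega : R - 1 ≤ t - 1))
        hjT.2
      simp only [ne_eq, Fin.mk.injEq]
      omega
  have hdisj : (Finset.Icc (R+1) n : Set ℕ).PairwiseDisjoint T := by
    intro a ha b hb hab
    simp only [Finset.coe_Icc, Set.mem_Icc] at ha hb
    refine Finset.disjoint_left.2 ?_
    intro j hja hjb
    rw [hT _ ha.1 ha.2, Finset.mem_filter] at hja
    rw [hT _ hb.1 hb.2, Finset.mem_filter] at hjb
    have hjR := mem_Aset.1 hja.1
    refine hjR ⟨a - 1, by omega⟩ ⟨b - 1, by omega⟩ ?_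
      (by exact (by omega : R ≤ a - 1)) (by exact (by omega : R ≤ b - 1)) ?_
    · simp only [ne_eq, Fin.mk.injEq]; omega
    · rw [← hja.2, ← hjb.2]
  rw [← Finset.sum_sdiff hsub, add_comm, hdecomp, Finset.sum_biUnion hdisj]
  congr 1
  refine Finset.sum_congr rfl ?_
  intro t ht
  simp only [Finset.mem_Icc] at ht
  rw [hT _ ht.1 ht.2]
  exact Tsum N n R t hR hRn ht.1 ht.2 θ a₀ f
end

section
/- For real α ≠ 0 and large L, if one averages (1/X)∫_0^X terms of the form ((√M t)/(2π))^{-2πia/L} · 2 log((√M t)/(2π)) · L/(2πia) dt minus (1/X)∫_0^X 2 log((√M t)/(2π)) · L/(2πia) dt with L = log(√M X/(2π)), the leading asymptotic as X → ∞ is (L^2/(πia))(e^{-2πia} - 1); consequently the symmetrized combination over ±a has leading term -4L^2 sin(2πa)/(2πa). -/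
open Filter Topology Complex intervalIntegral

/-- The averaged difference of integrals
`(1/X)∫₀^X (√M t/(2π))^{-2πia/L} · 2log(√M t/(2π)) · L/(2πia) dt
  - (1/X)∫₀^X 2log(√M t/(2π)) · L/(2πia) dt`, with `L = log(√M X/(2π))`. -/
noncomputable def termA (M a X : ℝ) : ℂ :=
  (1 / (X : ℂ)) *
      (∫ t in (0 : ℝ)..X,
        (((Real.sqrt M * t / (2 * Real.pi)) : ℝ) : ℂ) ^
            ((-2 * Real.pi * Complex.I * a) / (Real.log (Real.sqrt M * X / (2 * Real.pi)) : ℂ)) *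
          (2 * (Real.log (Real.sqrt M * t / (2 * Real.pi)) : ℂ)) *
          ((Real.log (Real.sqrt M * X / (2 * Real.pi)) : ℂ) / (2 * Real.pi * Complex.I * a)))
    - (1 / (X : ℂ)) *
      (∫ t in (0 : ℝ)..X,
        (2 * (Real.log (Real.sqrt M * t / (2 * Real.pi)) : ℂ)) *
          ((Real.log (Real.sqrt M * X / (2 * Real.pi)) : ℂ) / (2 * Real.pi * Complex.I * a)))


open MeasureTheory


lemma abs_log_le (t : ℝ) (ht : 0 < t) : |Real.log t| ≤ 2 * t ^ (-(1/2) : ℝ) + t := by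
  rcases le_or_gt 1 t with h | h
  · have h1 : Real.log t ≤ t := (Real.log_le_sub_one_of_pos ht).trans (by linarith)
    have h2 : 0 ≤ Real.log t := Real.log_nonneg h
    have h3 : 0 < t ^ (-(1/2) : ℝ) := Real.rpow_pos_of_pos ht _
    rw [_root_.abs_of_nonneg h2]; linarith
  · have hs : 0 < Real.sqrt t := Real.sqrt_pos.mpr ht
    have h1 : Real.log (Real.sqrt t)⁻¹ ≤ (Real.sqrt t)⁻¹ - 1 :=
      Real.log_le_sub_one_of_pos (by positivity)
    have h2 : Real.log (Real.sqrt t)⁻¹ = -(Real.log t / 2) := by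
      rw [Real.log_inv, Real.log_sqrt ht.le]
    have h3 : t ^ (-(1/2) : ℝ) = (Real.sqrt t)⁻¹ := by
      rw [Real.rpow_neg ht.le, Real.sqrt_eq_rpow]
    have h4 : Real.log t ≤ 0 := Real.log_nonpos ht.le h.le
    rw [_root_.abs_of_nonpos h4, h3]
    nlinarith [h1, h2]

lemma key_integral (c X : ℝ) (hc : 0 < c) (hX : 0 < X) (s : ℂ) (hs : s.re = 0) :
    ∫ t in (0:ℝ)..X, ((c*t : ℝ) : ℂ) ^ s * (Real.log (c*t) : ℂ)
      = X * ((c*X : ℝ) : ℂ) ^ s * ((Real.log (c*X) : ℂ)/(s+1) - 1/(s+1)^2) := by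
  have hs1 : s + 1 ≠ 0 := by
    intro h
    have := congrArg Complex.re h
    simp [hs] at this
  set F : ℝ → ℂ := fun t =>
    (t:ℂ) * ((c*t : ℝ):ℂ)^s * ((Real.log (c*t) : ℂ)/(s+1) - 1/(s+1)^2) with hFdef
  have hF0 : F 0 = 0 := by simp [hFdef]
  -- derivative
  have hderiv : ∀ t ∈ Set.Ioo (0:ℝ) X,
      HasDerivWithinAt F (((c*t : ℝ):ℂ) ^ s * (Real.log (c*t) : ℂ)) (Set.Ioi t) t := by
    intro t ht
    have ht0 : 0 < t := ht.1
    have hct : 0 < c * t := mul_pos hc ht0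
    have hw : ((c*t : ℝ) : ℂ) ≠ 0 := by simpa using hct.ne'
    have d1 : HasDerivAt (fun t : ℝ => ((c*t : ℝ) : ℂ)) (c : ℂ) t := by
      have : HasDerivAt (fun t : ℝ => c * t) c t := by
        simpa using (hasDerivAt_id t).const_mul c
      exact this.ofReal_comp
    have d2 : HasDerivAt (fun t : ℝ => ((c*t : ℝ) : ℂ) ^ s) (s * ((c*t:ℝ):ℂ) ^ (s-1) * c) t := by
      have h0 : ((c*t:ℝ):ℂ) ∈ Complex.slitPlane := by
        rw [Complex.mem_slitPlane_iff]; left; simpa using hct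
      have := (Complex.hasStrictDerivAt_cpow_const (c := s) h0).hasDerivAt.comp t d1
      simpa [mul_comm, mul_assoc, Function.comp_def] using this
    have d3 : HasDerivAt (fun t : ℝ => ((Real.log (c*t) : ℝ) : ℂ)) ((1/(c*t))*c : ℝ) t := by
      have : HasDerivAt (fun t : ℝ => Real.log (c*t)) (1/(c*t)*c) t := by
        have h := (Real.hasDerivAt_log hct.ne').comp t
          (by simpa using (hasDerivAt_id t).const_mul c)
        simpa [Function.comp_def] using h
      exact this.ofReal_comp
    have dH : HasDerivAt (fun t : ℝ => (Real.log (c*t) : ℂ)/(s+1) - 1/(s+1)^2)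
        (((1/(c*t))*c : ℝ) / (s+1)) t := (d3.div_const (s+1)).sub_const _
    have dt : HasDerivAt (fun t : ℝ => (t : ℂ)) 1 t := (hasDerivAt_id t).ofReal_comp
    have dF := (dt.mul d2).mul dH
    have : HasDerivAt F (((c*t : ℝ):ℂ) ^ s * (Real.log (c*t) : ℂ)) t := by
      rw [hFdef]
      convert dF using 1
      case e'_4 => exact rfl
      case e'_8 => rfl
      have hsub : ((c*t:ℝ):ℂ) ^ (s-1) = ((c*t:ℝ):ℂ) ^ s / ((c*t:ℝ):ℂ) := by
        rw [Complex.cpow_sub _ _ hw, Complex.cpow_one]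
      have htne : (t:ℂ) ≠ 0 := by exact_mod_cast ht0.ne'
      have hcne : (c:ℂ) ≠ 0 := by exact_mod_cast hc.ne'
      rw [hsub, Pi.mul_apply]
      push_cast
      generalize ((c:ℂ)*(t:ℂ))^s = W
      field_simp [hs1, htne, hcne]
      ring
    exact this.hasDerivWithinAt
  -- continuity
  have habs : ∀ t : ℝ, 0 < t → ‖((c*t : ℝ):ℂ)^s‖ = 1 := by
    intro t ht
    rw [Complex.norm_cpow_eq_rpow_re_of_pos (mul_pos hc ht), hs,
      Real.rpow_zero]
  have hcont : ContinuousOn F (Set.Icc 0 X) := by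
    intro t ht
    rcases eq_or_lt_of_le ht.1 with h0 | h0
    · -- t = 0
      have htends : Tendsto F (𝓝[>] (0:ℝ)) (𝓝 0) := by
        have hglim : Tendsto (fun t : ℝ =>
            |t * Real.log (c*t)| / ‖(s+1 : ℂ)‖ + |t| / ‖(s+1:ℂ)‖^2) (𝓝[>] (0:ℝ)) (𝓝 0) := by
          have h2 : Tendsto (fun t : ℝ => Real.log t * t) (𝓝[>] (0:ℝ)) (𝓝 0) := by
            simpa using tendsto_log_mul_rpow_nhdsGT_zero one_pos
          have h1 : Tendsto (fun t : ℝ => t * Real.log c) (𝓝[>] (0:ℝ)) (𝓝 0) := by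
            have : Tendsto (fun t : ℝ => t * Real.log c) (𝓝 (0:ℝ)) (𝓝 (0 * Real.log c)) :=
              (continuous_id.mul continuous_const).tendsto 0
            simpa using this.mono_left nhdsWithin_le_nhds
          have hA : Tendsto (fun t : ℝ => t * Real.log (c*t)) (𝓝[>] (0:ℝ)) (𝓝 0) := by
            have := h1.add h2
            rw [add_zero] at this
            refine this.congr' ?_
            filter_upwards [self_mem_nhdsWithin] with t ht
            rw [Real.log_mul hc.ne' (ne_of_gt ht)]
            ring
          have hB : Tendsto (fun t : ℝ => (t:ℝ)) (𝓝[>] (0:ℝ)) (𝓝 0) :=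
            tendsto_id.mono_left nhdsWithin_le_nhds
          have := ((hA.abs.div_const ‖(s+1:ℂ)‖).add (hB.abs.div_const (‖(s+1:ℂ)‖^2)))
          simpa using this
        apply squeeze_zero_norm' ?_ hglim
        filter_upwards [self_mem_nhdsWithin] with t (ht : 0 < t)
        have h1 : ‖F t‖ = t * ‖((Real.log (c*t) : ℂ)/(s+1) - 1/(s+1)^2)‖ := by
          rw [hFdef]
          simp only [norm_mul, habs t ht, Complex.norm_real, Real.norm_eq_abs,
            _root_.abs_of_nonneg ht.le]
          ring
        rw [h1]
        have h2 : ‖((Real.log (c*t) : ℂ)/(s+1) - 1/(s+1)^2)‖ ≤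
            |Real.log (c*t)| / ‖(s+1:ℂ)‖ + 1 / ‖(s+1:ℂ)‖^2 := by
          refine (norm_sub_le _ _).trans ?_
          gcongr
          · rw [norm_div, Complex.norm_real, Real.norm_eq_abs]
          · rw [norm_div, norm_one, norm_pow]
        calc t * ‖((Real.log (c*t) : ℂ)/(s+1) - 1/(s+1)^2)‖
            ≤ t * (|Real.log (c*t)| / ‖(s+1:ℂ)‖ + 1 / ‖(s+1:ℂ)‖^2) := by
              exact mul_le_mul_of_nonneg_left h2 ht.le
          _ = |t * Real.log (c*t)| / ‖(s+1:ℂ)‖ + t / ‖(s+1:ℂ)‖^2 := by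
              rw [abs_mul, _root_.abs_of_nonneg ht.le]; ring
          _ ≤ |t * Real.log (c*t)| / ‖(s+1:ℂ)‖ + |t| / ‖(s+1:ℂ)‖^2 := by
              gcongr; exact le_abs_self t
      have hsub : Set.Icc (0:ℝ) X ⊆ Set.Ioi 0 ∪ {0} := by
        intro x hx
        rcases eq_or_lt_of_le hx.1 with h | h
        · exact Or.inr (by simp [h.symm])
        · exact Or.inl h
      rw [← h0]
      unfold ContinuousWithinAt
      rw [hF0]
      refine Tendsto.mono_left ?_ ((nhdsWithin_mono _ hsub).trans_eq (nhdsWithin_union _ _ _))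
      rw [nhdsWithin_singleton]
      refine tendsto_sup.mpr ⟨htends, ?_⟩
      simpa [hF0] using tendsto_pure_nhds F 0
    · -- t > 0
      have hct : 0 < c * t := mul_pos hc h0
      have c1 : ContinuousAt (fun t:ℝ => ((c*t:ℝ):ℂ)) t :=
        Complex.continuous_ofReal.continuousAt.comp
          ((continuous_const.mul continuous_id).continuousAt)
      have c2 : ContinuousAt (fun t:ℝ => ((c*t:ℝ):ℂ)^s) t := by
        have h0 : ((c*t:ℝ):ℂ) ∈ Complex.slitPlane := by
          rw [Complex.mem_slitPlane_iff]; left; simpa using hct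
        exact c1.cpow tendsto_const_nhds h0
      have c3 : ContinuousAt (fun t:ℝ => ((Real.log (c*t) : ℝ):ℂ)) t := by
        refine Complex.continuous_ofReal.continuousAt.comp ?_
        exact (Real.continuousAt_log hct.ne').comp
          ((continuous_const.mul continuous_id).continuousAt)
      refine ContinuousAt.continuousWithinAt ?_
      exact (Complex.continuous_ofReal.continuousAt.mul c2).mul
        ((c3.div_const _).sub continuousAt_const)
  -- integrability
  have hint : IntervalIntegrable (fun t => ((c*t : ℝ):ℂ) ^ s * (Real.log (c*t) : ℂ))
      volume 0 X := by
    rw [intervalIntegrable_iff_integrableOn_Ioc_of_le hX.le]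
    have hg : IntegrableOn (fun t:ℝ => |Real.log c| + (2 * t ^ (-(1/2):ℝ) + t))
        (Set.Ioc 0 X) volume := by
      apply Integrable.add
      · exact integrableOn_const measure_Ioc_lt_top.ne
      · apply Integrable.add
        · have h := intervalIntegrable_rpow' (a := 0) (b := X) 
            (by norm_num : (-1:ℝ) < -(1/2))
          rw [intervalIntegrable_iff_integrableOn_Ioc_of_le hX.le] at h
          exact h.const_mul 2
        · exact (continuous_id.integrableOn_Ioc)
    apply hg.mono'
    · refine ContinuousOn.aestronglyMeasurable ?_ measurableSet_Ioc
      intro t ht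
      have hct : 0 < c * t := mul_pos hc ht.1
      have c1 : ContinuousAt (fun t:ℝ => ((c*t:ℝ):ℂ)) t :=
        Complex.continuous_ofReal.continuousAt.comp
          ((continuous_const.mul continuous_id).continuousAt)
      have c2 : ContinuousAt (fun t:ℝ => ((c*t:ℝ):ℂ)^s) t := by
        have h0 : ((c*t:ℝ):ℂ) ∈ Complex.slitPlane := by
          rw [Complex.mem_slitPlane_iff]; left; simpa using hct
        exact c1.cpow tendsto_const_nhds h0
      have c3 : ContinuousAt (fun t:ℝ => ((Real.log (c*t) : ℝ):ℂ)) t := by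
        refine Complex.continuous_ofReal.continuousAt.comp ?_
        exact (Real.continuousAt_log hct.ne').comp
          ((continuous_const.mul continuous_id).continuousAt)
      exact (c2.mul c3).continuousWithinAt
    · filter_upwards [ae_restrict_mem measurableSet_Ioc] with t ht
      have ht0 : 0 < t := ht.1
      have hct : 0 < c * t := mul_pos hc ht0
      have h1 : ‖((c*t : ℝ):ℂ) ^ s * (Real.log (c*t) : ℂ)‖ = |Real.log (c*t)| := by
        rw [norm_mul, habs t ht0, one_mul, Complex.norm_real, Real.norm_eq_abs]
      rw [h1]
      have h2 : |Real.log (c*t)| ≤ |Real.log c| + |Real.log t| := by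
        rw [Real.log_mul hc.ne' ht0.ne']
        exact abs_add_le _ _
      have h3 := abs_log_le t ht0
      linarith
  rw [integral_eq_sub_of_hasDeriv_right_of_le hX.le hcont hderiv hint, hF0, sub_zero]


noncomputable def gfun (a : ℝ) : ℝ → ℂ := fun L =>
  (1/((Real.pi : ℂ) * Complex.I * (a:ℂ))) *
    ((Complex.exp (-2*(Real.pi:ℂ)*Complex.I*(a:ℂ)) *
      ((L:ℂ)/((-2*(Real.pi:ℂ)*Complex.I*(a:ℂ))/(L:ℂ) + 1)
        - 1/((-2*(Real.pi:ℂ)*Complex.I*(a:ℂ))/(L:ℂ) + 1)^2)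
      - ((L:ℂ) - 1)) / (L:ℂ))

lemma gfun_tendsto (a : ℝ) :
    Tendsto (gfun a) atTop
      (𝓝 ((1 / ((Real.pi:ℂ) * Complex.I * (a:ℂ))) *
        (Complex.exp (-2 * (Real.pi:ℂ) * Complex.I * (a:ℂ)) - 1))) := by
  have h0 : Tendsto (fun L : ℝ => ((L:ℂ))⁻¹) atTop (𝓝 0) := by
    have h := tendsto_inv_atTop_zero (𝕜 := ℝ)
    have := (Complex.continuous_ofReal.tendsto 0).comp h
    simpa [Function.comp_def, Complex.ofReal_inv] using this
  have h1 : Tendsto (fun L : ℝ => (-2*(Real.pi:ℂ)*Complex.I*(a:ℂ))/(L:ℂ) + 1) atTop (𝓝 1) := by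
    have := ((tendsto_const_nhds (x := -2*(Real.pi:ℂ)*Complex.I*(a:ℂ))).mul h0).add
      (tendsto_const_nhds (x := (1:ℂ)))
    simp only [mul_zero, zero_add] at this
    refine this.congr fun L => ?_
    rw [div_eq_mul_inv]
  -- expanded form tendsto
  have hT : Tendsto (fun L : ℝ =>
      (1/((Real.pi : ℂ) * Complex.I * (a:ℂ))) *
        (Complex.exp (-2*(Real.pi:ℂ)*Complex.I*(a:ℂ)) *
          (((-2*(Real.pi:ℂ)*Complex.I*(a:ℂ))/(L:ℂ) + 1)⁻¹
            - (((-2*(Real.pi:ℂ)*Complex.I*(a:ℂ))/(L:ℂ) + 1)^2)⁻¹ * (L:ℂ)⁻¹)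
          - 1 + (L:ℂ)⁻¹)) atTop
      (𝓝 ((1/((Real.pi : ℂ) * Complex.I * (a:ℂ))) *
        (Complex.exp (-2*(Real.pi:ℂ)*Complex.I*(a:ℂ)) * ((1:ℂ)⁻¹ - ((1:ℂ)^2)⁻¹ * 0) - 1 + 0))) := by
    exact tendsto_const_nhds.mul
      (((tendsto_const_nhds.mul ((h1.inv₀ one_ne_zero).sub
        (((h1.pow 2).inv₀ (by norm_num)).mul h0))).sub tendsto_const_nhds).add h0)
  have hval : ((1/((Real.pi : ℂ) * Complex.I * (a:ℂ))) *
      (Complex.exp (-2*(Real.pi:ℂ)*Complex.I*(a:ℂ)) * ((1:ℂ)⁻¹ - ((1:ℂ)^2)⁻¹ * 0) - 1 + 0))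
      = (1 / ((Real.pi:ℂ) * Complex.I * (a:ℂ))) *
        (Complex.exp (-2 * (Real.pi:ℂ) * Complex.I * (a:ℂ)) - 1) := by
    norm_num
  rw [hval] at hT
  refine hT.congr' ?_
  filter_upwards [eventually_gt_atTop (0:ℝ)] with L hL
  have hLne : ((L:ℝ):ℂ) ≠ 0 := by exact_mod_cast hL.ne'
  have hsre : ((-2*(Real.pi:ℂ)*Complex.I*(a:ℂ))/((L:ℝ):ℂ)).re = 0 := by
    have h : (-2*(Real.pi:ℂ)*Complex.I*(a:ℂ))/((L:ℝ):ℂ)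
        = ((-2*Real.pi*a/L : ℝ):ℂ) * Complex.I := by
      push_cast; ring
    rw [h]; simp
  have hv : (-2*(Real.pi:ℂ)*Complex.I*(a:ℂ))/((L:ℝ):ℂ) + 1 ≠ 0 := by
    intro h
    have := congrArg Complex.re h
    simp [Complex.add_re, hsre] at this
  unfold gfun
  congr 1
  generalize (-2*(Real.pi:ℂ)*Complex.I*(a:ℂ))/((L:ℝ):ℂ) + 1 = v at hv
  field_simp [hLne, hv]
  ring

lemma termA_div (M a X : ℝ) (hM : 0 < M) (ha : a ≠ 0)
    (hX0 : 0 < X) (hcx : 1 < (Real.sqrt M / (2*Real.pi)) * X) :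
    termA M a X / ((Real.log (Real.sqrt M * X / (2 * Real.pi)) : ℂ))^2
      = gfun a (Real.log ((Real.sqrt M / (2*Real.pi)) * X)) := by
  have hπ : (0:ℝ) < Real.pi := Real.pi_pos
  obtain ⟨c, hcdef⟩ : ∃ c', Real.sqrt M / (2*Real.pi) = c' := ⟨_, rfl⟩
  rw [hcdef] at hcx ⊢
  have hc : 0 < c := hcdef ▸ div_pos (Real.sqrt_pos.mpr hM) (by positivity)
  have hrw : ∀ x : ℝ, Real.sqrt M * x / (2*Real.pi) = c * x := fun x => by
    rw [← hcdef]; ring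
  unfold termA
  simp only [hrw]
  have hL0 : 0 < Real.log (c*X) := Real.log_pos hcx
  have hLne : ((Real.log (c*X) : ℝ):ℂ) ≠ 0 := by exact_mod_cast hL0.ne'
  have hsre : ((-2*(Real.pi:ℂ)*Complex.I*(a:ℂ))/((Real.log (c*X) : ℝ):ℂ)).re = 0 := by
    have h : (-2*(Real.pi:ℂ)*Complex.I*(a:ℂ))/((Real.log (c*X) : ℝ):ℂ)
        = ((-2*Real.pi*a/Real.log (c*X) : ℝ):ℂ) * Complex.I := by
      push_cast; ring
    rw [h]
    simp
  have hs1 : (-2*(Real.pi:ℂ)*Complex.I*(a:ℂ))/((Real.log (c*X) : ℝ):ℂ) + 1 ≠ 0 := by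
    intro h
    have := congrArg Complex.re h
    simp [Complex.add_re, hsre] at this
  have hcx0 : (0:ℝ) < c*X := lt_trans one_pos hcx
  have haC : ((a:ℝ):ℂ) ≠ 0 := by exact_mod_cast ha
  have hπC : ((Real.pi:ℝ):ℂ) ≠ 0 := by exact_mod_cast hπ.ne'
  have hXC : ((X:ℝ):ℂ) ≠ 0 := by exact_mod_cast hX0.ne'
  have h1 : (∫ t in (0:ℝ)..X, ((c*t:ℝ):ℂ)
          ^ ((-2*(Real.pi:ℂ)*Complex.I*(a:ℂ))/((Real.log (c*X) : ℝ):ℂ))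
          * (2*(Real.log (c*t):ℂ))
          * (((Real.log (c*X):ℝ):ℂ)/(2*(Real.pi:ℂ)*Complex.I*(a:ℂ))))
      = (2*(((Real.log (c*X):ℝ):ℂ)/(2*(Real.pi:ℂ)*Complex.I*(a:ℂ))))
        * ((X:ℂ) * (((c*X:ℝ):ℂ)
            ^ ((-2*(Real.pi:ℂ)*Complex.I*(a:ℂ))/((Real.log (c*X) : ℝ):ℂ))
          * (((Real.log (c*X):ℝ):ℂ)
              /((-2*(Real.pi:ℂ)*Complex.I*(a:ℂ))/((Real.log (c*X) : ℝ):ℂ) + 1)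
            - 1/((-2*(Real.pi:ℂ)*Complex.I*(a:ℂ))/((Real.log (c*X) : ℝ):ℂ) + 1)^2))) := by
    rw [show (fun t : ℝ => ((c*t:ℝ):ℂ)
          ^ ((-2*(Real.pi:ℂ)*Complex.I*(a:ℂ))/((Real.log (c*X) : ℝ):ℂ))
          * (2*(Real.log (c*t):ℂ))
          * (((Real.log (c*X):ℝ):ℂ)/(2*(Real.pi:ℂ)*Complex.I*(a:ℂ))))
      = fun t : ℝ => (2*(((Real.log (c*X):ℝ):ℂ)/(2*(Real.pi:ℂ)*Complex.I*(a:ℂ))))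
        * (((c*t:ℝ):ℂ)
            ^ ((-2*(Real.pi:ℂ)*Complex.I*(a:ℂ))/((Real.log (c*X) : ℝ):ℂ))
          * (Real.log (c*t):ℂ)) from funext fun t => by ring]
    rw [intervalIntegral.integral_const_mul, key_integral c X hc hX0 _ hsre]
    ring
  have h2 : (∫ t in (0:ℝ)..X, (2*(Real.log (c*t):ℂ))
        * (((Real.log (c*X):ℝ):ℂ)/(2*(Real.pi:ℂ)*Complex.I*(a:ℂ))))
      = (2*(((Real.log (c*X):ℝ):ℂ)/(2*(Real.pi:ℂ)*Complex.I*(a:ℂ))))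
        * ((X:ℂ) * (((Real.log (c*X):ℝ):ℂ) - 1)) := by
    rw [show (fun t : ℝ => (2*(Real.log (c*t):ℂ))
        * (((Real.log (c*X):ℝ):ℂ)/(2*(Real.pi:ℂ)*Complex.I*(a:ℂ))))
      = fun t : ℝ => (2*(((Real.log (c*X):ℝ):ℂ)/(2*(Real.pi:ℂ)*Complex.I*(a:ℂ))))
        * (((c*t:ℝ):ℂ)^(0:ℂ) * (Real.log (c*t):ℂ)) from funext fun t => by
          rw [Complex.cpow_zero]; ring]
    rw [intervalIntegral.integral_const_mul, key_integral c X hc hX0 0 (by simp)]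
    norm_num
  have hE : ((c*X:ℝ):ℂ)
        ^ ((-2*(Real.pi:ℂ)*Complex.I*(a:ℂ))/((Real.log (c*X) : ℝ):ℂ))
      = Complex.exp (-2*(Real.pi:ℂ)*Complex.I*(a:ℂ)) := by
    rw [Complex.cpow_def_of_ne_zero (by simpa using hcx0.ne'),
      ← Complex.ofReal_log hcx0.le, mul_div_cancel₀ _ hLne]
  rw [h1, h2, hE]
  unfold gfun
  rw [show (2*(Real.pi:ℂ)*Complex.I*(a:ℂ)) = 2*((Real.pi:ℂ)*Complex.I*(a:ℂ)) from by ring]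
  generalize (((Real.log (c*X):ℝ):ℂ)
      /((-2*(Real.pi:ℂ)*Complex.I*(a:ℂ))/((Real.log (c*X) : ℝ):ℂ) + 1)
    - 1/((-2*(Real.pi:ℂ)*Complex.I*(a:ℂ))/((Real.log (c*X) : ℝ):ℂ) + 1)^2 : ℂ) = A
  generalize Complex.exp (-2*(Real.pi:ℂ)*Complex.I*(a:ℂ)) = E
  have hpne : (Real.pi:ℂ)*Complex.I*(a:ℂ) ≠ 0 :=
    mul_ne_zero (mul_ne_zero hπC Complex.I_ne_zero) haC
  generalize (Real.pi:ℂ)*Complex.I*(a:ℂ) = p at hpne ⊢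
  field_simp [hXC, hLne, hpne]

lemma sum_value (a : ℝ) (ha : a ≠ 0) :
    (1 / ((Real.pi:ℂ) * Complex.I * (a:ℂ))) * (Complex.exp (-2 * (Real.pi:ℂ) * Complex.I * (a:ℂ)) - 1)
      + (1 / ((Real.pi:ℂ) * Complex.I * ((-a : ℝ):ℂ))) *
        (Complex.exp (-2 * (Real.pi:ℂ) * Complex.I * ((-a:ℝ):ℂ)) - 1)
    = ((-4 * Real.sin (2 * Real.pi * a) / (2 * Real.pi * a) : ℝ) : ℂ) := by
  have haC : ((a:ℝ):ℂ) ≠ 0 := by exact_mod_cast ha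
  have hπC : ((Real.pi:ℝ):ℂ) ≠ 0 := by exact_mod_cast Real.pi_pos.ne'
  push_cast
  rw [show (-2 * (Real.pi:ℂ) * Complex.I * (a:ℂ)) = (-(2 * (Real.pi:ℂ) * (a:ℂ))) * Complex.I
      from by ring,
    show (-2 * (Real.pi:ℂ) * Complex.I * (-(a:ℂ))) = (2 * (Real.pi:ℂ) * (a:ℂ)) * Complex.I
      from by ring,
    Complex.exp_mul_I, Complex.exp_mul_I, Complex.sin_neg, Complex.cos_neg]
  generalize Complex.sin (2 * (Real.pi:ℂ) * (a:ℂ)) = S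
  generalize Complex.cos (2 * (Real.pi:ℂ) * (a:ℂ)) = C
  have hp : (Real.pi:ℂ) * Complex.I * (a:ℂ) ≠ 0 :=
    mul_ne_zero (mul_ne_zero hπC Complex.I_ne_zero) haC
  field_simp
  linear_combination (0:ℂ) * Complex.I_sq

lemma main1 (M a : ℝ) (hM : 0 < M) (ha : a ≠ 0) :
    Tendsto (fun X : ℝ => termA M a X / ((Real.log (Real.sqrt M * X / (2 * Real.pi)) : ℂ)) ^ 2)
      atTop (𝓝 ((1 / ((Real.pi:ℂ) * Complex.I * (a:ℂ))) *
        (Complex.exp (-2 * (Real.pi:ℂ) * Complex.I * (a:ℂ)) - 1))) := by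
  have hπ : (0:ℝ) < Real.pi := Real.pi_pos
  have hc : 0 < Real.sqrt M / (2*Real.pi) := div_pos (Real.sqrt_pos.mpr hM) (by positivity)
  have hlog : Tendsto (fun X : ℝ => Real.log ((Real.sqrt M/(2*Real.pi)) * X)) atTop atTop :=
    Real.tendsto_log_atTop.comp (Tendsto.const_mul_atTop hc tendsto_id)
  have h := (gfun_tendsto a).comp hlog
  simp only [Function.comp_def] at h
  refine h.congr' ?_
  filter_upwards [eventually_gt_atTop (0:ℝ), eventually_gt_atTop (1/(Real.sqrt M/(2*Real.pi)))]
    with X hX0 hX1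
  have hcx : 1 < (Real.sqrt M/(2*Real.pi)) * X := by
    rw [mul_comm]; exact (div_lt_iff₀ hc).mp hX1
  exact (termA_div M a X hM ha hX0 hcx).symm

/-- As `X → ∞` (so `L = log(√M X/(2π)) → ∞`), the leading asymptotic of the averaged
integral combination is `(L²/(πia))(e^{-2πia} - 1)`; consequently the symmetrized
combination over `±a` has leading term `-4L² sin(2πa)/(2πa)`. -/
theorem stmt17 (M a : ℝ) (hM : 0 < M) (ha : a ≠ 0) :
    Tendsto (fun X : ℝ => termA M a X / ((Real.log (Real.sqrt M * X / (2 * Real.pi)) : ℂ)) ^ 2)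
      atTop (𝓝 ((1 / (Real.pi * Complex.I * a)) * (Complex.exp (-2 * Real.pi * Complex.I * a) - 1))) ∧
    Tendsto (fun X : ℝ =>
        (termA M a X + termA M (-a) X) / ((Real.log (Real.sqrt M * X / (2 * Real.pi)) : ℂ)) ^ 2)
      atTop (𝓝 (((-4 * Real.sin (2 * Real.pi * a) / (2 * Real.pi * a)) : ℝ) : ℂ)) := by
  constructor
  · exact main1 M a hM ha
  · have h2 := (main1 M a hM ha).add (main1 M (-a) hM (neg_ne_zero.mpr ha))
    rw [sum_value a ha] at h2
    refine h2.congr fun X => ?_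
    rw [add_div]
end
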